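/- Let N ≥ 2 and let Q be a real N×N orthogonal matrix. Then there exists a nonzero vector v ∈ ℝ^N such that H(v) Q has block form [[1, 0ᵀ], [0, Q′]], where the first row and first column of H(v) Q equal the first standard basis vector, and Q′ is an (N−1)×(N−1) orthogonal matrix with det Q′ = −det Q. -/

import Mathlib

open scoped BigOperators Matrix

/-- The Householder reflection `H(v) = I - 2 v vᵀ / ‖v‖₂²`. -/
noncomputable def householder {N : ℕ} (v : Fin N → ℝ) : Matrix (Fin N) (Fin N) ℝ :=
  (1 : Matrix (Fin N) (Fin N) ℝ) - (2 / ∑ k, v k ^ 2) • Matrix.vecMulVec v v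

lemma hh_sum_sq {N : ℕ} (v : Fin N → ℝ) : (∑ k, v k ^ 2) = v ⬝ᵥ v := by
  simp [dotProduct, sq]

lemma hh_vmv_mul_vmv {N : ℕ} (v : Fin N → ℝ) :
    Matrix.vecMulVec v v * Matrix.vecMulVec v v = (v ⬝ᵥ v) • Matrix.vecMulVec v v := by
  ext i j
  rw [Matrix.mul_apply, Matrix.smul_apply, Matrix.vecMulVec_apply, dotProduct,
    smul_eq_mul, Finset.sum_mul]
  refine Finset.sum_congr rfl fun k _ => ?_
  rw [Matrix.vecMulVec_apply, Matrix.vecMulVec_apply]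
  ring

lemma hh_transpose {N : ℕ} (v : Fin N → ℝ) : (householder v)ᵀ = householder v := by
  unfold householder
  rw [Matrix.transpose_sub, Matrix.transpose_one, Matrix.transpose_smul]
  congr 1
  ext i j
  simp [Matrix.vecMulVec_apply, mul_comm]

lemma hh_mul_self {N : ℕ} {v : Fin N → ℝ} (hv : v ≠ 0) :
    householder v * householder v = 1 := by
  have hs : v ⬝ᵥ v ≠ 0 := fun h => hv ((dotProduct_self_eq_zero).mp h)
  unfold householder
  rw [hh_sum_sq]
  have hc : (2 / (v ⬝ᵥ v)) * ((2 / (v ⬝ᵥ v)) * (v ⬝ᵥ v)) = 2 / (v ⬝ᵥ v) + 2 / (v ⬝ᵥ v) := by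
    field_simp
    norm_num
  simp only [sub_mul, mul_sub, Matrix.one_mul, Matrix.mul_one, Matrix.smul_mul,
    Matrix.mul_smul, hh_vmv_mul_vmv, smul_smul, hc, add_smul]

  abel

lemma hh_det {N : ℕ} {v : Fin N → ℝ} (hv : v ≠ 0) : (householder v).det = -1 := by
  have hs : v ⬝ᵥ v ≠ 0 := fun h => hv ((dotProduct_self_eq_zero).mp h)
  have h1 : householder v =
      1 + Matrix.replicateCol Unit ((-(2 / (v ⬝ᵥ v))) • v) * Matrix.replicateRow Unit v := by
    rw [← Matrix.vecMulVec_eq, householder, hh_sum_sq, sub_eq_add_neg, ← neg_smul]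
    congr 1
    ext i j
    simp [Matrix.vecMulVec_apply]
    ring
  rw [h1, Matrix.det_one_add_replicateCol_mul_replicateRow]
  rw [dotProduct_smul]
  field_simp
  rw [smul_eq_mul, neg_mul, div_mul_cancel₀ _ hs]; ring

lemma hh_mulVec {N : ℕ} (v x : Fin N → ℝ) :
    householder v *ᵥ x = x - ((2 / (v ⬝ᵥ v)) * (v ⬝ᵥ x)) • v := by
  have hvx : Matrix.vecMulVec v v *ᵥ x = (v ⬝ᵥ x) • v := by
    ext i
    rw [Matrix.mulVec, dotProduct, Pi.smul_apply, dotProduct, smul_eq_mul,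
      Finset.sum_mul]
    exact Finset.sum_congr rfl fun k _ => by rw [Matrix.vecMulVec_apply]; ring
  rw [householder, hh_sum_sq, Matrix.sub_mulVec, Matrix.one_mulVec,
    Matrix.smul_mulVec, hvx, smul_smul]

/-- For `N ≥ 2` and `Q` orthogonal, there is a nonzero `v ∈ ℝᴺ` such that `H(v) Q` has the
block form `[[1, 0ᵀ], [0, Q′]]` with `Q′` an `(N−1) × (N−1)` orthogonal matrix satisfying
`det Q′ = −det Q`. -/
theorem householder_reduce_first_column {N : ℕ} (hN : 2 ≤ N)
    (Q : Matrix (Fin N) (Fin N) ℝ) (hQ : Qᵀ * Q = 1) :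
    ∃ (v : Fin N → ℝ) (Q' : Matrix (Fin (N - 1)) (Fin (N - 1)) ℝ), v ≠ 0 ∧
      (householder v * Q) ⟨0, by omega⟩ ⟨0, by omega⟩ = 1 ∧
      (∀ j : Fin (N - 1),
        (householder v * Q) ⟨0, by omega⟩ ⟨(j : ℕ) + 1, by omega⟩ = 0 ∧
        (householder v * Q) ⟨(j : ℕ) + 1, by omega⟩ ⟨0, by omega⟩ = 0) ∧
      (∀ i j : Fin (N - 1),
        (householder v * Q) ⟨(i : ℕ) + 1, by omega⟩ ⟨(j : ℕ) + 1, by omega⟩ = Q' i j) ∧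
      Q'ᵀ * Q' = 1 ∧ Q'.det = -Q.det := by
  obtain ⟨n, rfl⟩ : ∃ n, N = n + 1 := ⟨N - 1, by omega⟩
  have hn : 1 ≤ n := by omega
  set x : Fin (n + 1) → ℝ := fun i => Q i 0 with hxdef
  have hxx : x ⬝ᵥ x = 1 := by
    have h := congrFun (congrFun hQ 0) 0
    simpa [Matrix.mul_apply, Matrix.one_apply, dotProduct, hxdef] using h
  -- find a nonzero v with H(v) x = e₀
  have key : ∃ v : Fin (n + 1) → ℝ, v ≠ 0 ∧ householder v *ᵥ x = Pi.single 0 1 := by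
    by_cases hxe : x = Pi.single 0 1
    · refine ⟨Pi.single ⟨1, by omega⟩ 1, ?_, ?_⟩
      · intro h
        have := congrFun h ⟨1, by omega⟩
        simp at this
      · have hvx : (Pi.single ⟨1, by omega⟩ 1 : Fin (n + 1) → ℝ) ⬝ᵥ x = 0 := by
          rw [single_dotProduct, hxe]
          have h10 : (⟨1, by omega⟩ : Fin (n + 1)) ≠ 0 := by
            intro h; exact absurd (congrArg Fin.val h) (by simp)
          simp [Pi.single_eq_of_ne h10]
        rw [hh_mulVec, hvx, mul_zero, zero_smul, sub_zero, hxe]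
    · refine ⟨x - Pi.single 0 1, sub_ne_zero.mpr hxe, ?_⟩
      set v : Fin (n + 1) → ℝ := x - Pi.single 0 1 with hvdef
      have hvv : v ⬝ᵥ v = 2 * (1 - x 0) := by
        rw [hvdef, sub_dotProduct, dotProduct_sub, dotProduct_sub,
          hxx, dotProduct_single, single_dotProduct, single_dotProduct]
        simp [Pi.single_apply]
        ring
      have hvx : v ⬝ᵥ x = 1 - x 0 := by
        rw [hvdef, sub_dotProduct, hxx, single_dotProduct]
        ring
      have hne : (1 : ℝ) - x 0 ≠ 0 := by
        intro h
        have hvv0 : v ⬝ᵥ v = 0 := by rw [hvv, h, mul_zero]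
        exact sub_ne_zero.mpr hxe ((dotProduct_self_eq_zero).mp hvv0)
      have hcoef : (2 / (v ⬝ᵥ v)) * (v ⬝ᵥ x) = 1 := by
        rw [hvv, hvx]; field_simp
      rw [hh_mulVec, hcoef, one_smul, hvdef]
      abel
  obtain ⟨v, hv, hHx⟩ := key
  set M : Matrix (Fin (n + 1)) (Fin (n + 1)) ℝ := householder v * Q with hMdef
  have hcol : ∀ i, M i 0 = (Pi.single (0 : Fin (n + 1)) (1 : ℝ) : Fin (n + 1) → ℝ) i := by
    intro i
    have h1 : M i 0 = (householder v *ᵥ x) i := by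
      rw [hMdef, Matrix.mul_apply, Matrix.mulVec, dotProduct]
    rw [h1, hHx]
  have hMM : Mᵀ * M = 1 := by
    rw [hMdef, Matrix.transpose_mul, hh_transpose, Matrix.mul_assoc,
      ← Matrix.mul_assoc (householder v), hh_mul_self hv, Matrix.one_mul, hQ]
  have hrow : ∀ j, M 0 j = (1 : Matrix (Fin (n + 1)) (Fin (n + 1)) ℝ) 0 j := by
    intro j
    have h := congrFun (congrFun hMM 0) j
    rw [Matrix.mul_apply] at h
    have h2 : ∀ k, Mᵀ 0 k * M k j = (Pi.single (0 : Fin (n + 1)) (1 : ℝ) : Fin (n + 1) → ℝ) k * M k j := by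
      intro k; rw [Matrix.transpose_apply, hcol k]
    rw [Finset.sum_congr rfl fun k _ => h2 k] at h
    simpa [Pi.single_apply] using h
  have hsucc : ∀ (i : Fin n) (h : (i : ℕ) + 1 < n + 1),
      (⟨(i : ℕ) + 1, h⟩ : Fin (n + 1)) = Fin.succ i := fun i h => rfl
  refine ⟨v, fun i j => M (Fin.succ i) (Fin.succ j), hv, ?_, ?_, ?_, ?_, ?_⟩
  · have h := hcol 0
    rw [Pi.single_eq_same] at h
    exact h
  · intro j
    constructor
    · have h := hrow ⟨(j : ℕ) + 1, by omega⟩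
      rw [Matrix.one_apply_ne (by intro hc; exact absurd (congrArg Fin.val hc) (by simp))] at h
      exact h
    · have h := hcol ⟨(j : ℕ) + 1, by omega⟩
      rw [Pi.single_eq_of_ne (by intro hc; exact absurd (congrArg Fin.val hc) (by simp))] at h
      exact h
  · intro i j
    rfl
  · ext i j
    have h := congrFun (congrFun hMM (Fin.succ i)) (Fin.succ j)
    rw [Matrix.mul_apply, Fin.sum_univ_succ] at h
    simp only [Matrix.transpose_apply] at h
    have hM0 : M 0 (Fin.succ j) = 0 := by
      rw [hrow, Matrix.one_apply_ne]
      exact (Fin.succ_ne_zero j).symm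
    rw [hM0, mul_zero, zero_add] at h
    change ((Matrix.of fun i j => M (Fin.succ i) (Fin.succ j))ᵀ * (Matrix.of fun i j => M (Fin.succ i) (Fin.succ j))) i j = _
    rw [Matrix.mul_apply]
    simp only [Matrix.transpose_apply, Matrix.of_apply]
    have hone : (1 : Matrix (Fin (n + 1)) (Fin (n + 1)) ℝ) (Fin.succ i) (Fin.succ j)
        = (1 : Matrix (Fin (n + 1 - 1)) (Fin (n + 1 - 1)) ℝ) i j := by
      simp [Matrix.one_apply, Fin.succ_inj]
    exact h.trans hone
  · have hdet1 : M.det = -Q.det := by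
      rw [hMdef, Matrix.det_mul, hh_det hv, neg_one_mul]
    have hdet2 : M.det = (M.submatrix Fin.succ Fin.succ).det := by
      rw [Matrix.det_succ_column_zero, Finset.sum_eq_single 0]
      · rw [hcol 0, Pi.single_eq_same, Fin.succAbove_zero]
        simp
      · intro b _ hb
        rw [hcol b, Pi.single_eq_of_ne hb, mul_zero, zero_mul]
      · intro h; exact absurd (Finset.mem_univ 0) h
    exact hdet2.symm.trans hdet1
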